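/- arXiv:2602.19960 — 2 statements merged into one kernel-verified Lean document; each statement's English description precedes it below -/
import Mathlib

section
/- The class R ⊆ 2^ω of m-rigid sets has full fair-coin measure: μ(R) = 1. Equivalently, the set of A ∈ 2^ω that are not m-rigid is a μ-null set. -/
open MeasureTheory

/-- The cylinder of binary sequences extending the finite string `σ`. -/
def cylinder (σ : List Bool) : Set (ℕ → Bool) :=
  {X | ∀ i, i < σ.length → X i = σ.getD i false}

/-- `μ` is the fair-coin product measure on Cantor space:
each cylinder `[σ]` has measure `2^{-|σ|}`. -/
def IsFairCoin (μ : Measure (ℕ → Bool)) : Prop :=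
  ∀ σ : List Bool, μ (cylinder σ) = (1 / 2 : ENNReal) ^ σ.length

/-- `A ∈ 2^ω` is m-rigid: every total computable `k` with
`∀ x, A x = A (k x)` (an m-autoreduction) is eventually the identity. -/
def MRigid (A : ℕ → Bool) : Prop :=
  ∀ k : ℕ → ℕ, Computable k → (∀ x, A x = A (k x)) → {x | k x ≠ x}.Finite

lemma countable_computable : {k : ℕ → ℕ | Computable k}.Countable := by
  rw [Set.countable_iff_exists_injective]
  have hc : ∀ k : {k : ℕ → ℕ | Computable k}, ∃ c : Nat.Partrec.Code,
      c.eval = (k.1 : ℕ →. ℕ) := fun k =>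
    Nat.Partrec.Code.exists_code.1 (Partrec.nat_iff.1 k.2)
  choose f hf using hc
  refine ⟨fun k => Encodable.encode (f k), fun k1 k2 h => ?_⟩
  have h' : f k1 = f k2 := Encodable.encode_injective h
  have h2 : (k1.1 : ℕ →. ℕ) = (k2.1 : ℕ →. ℕ) := by rw [← hf k1, ← hf k2, h']
  have : k1.1 = k2.1 := by
    funext x
    have := congrFun h2 x
    simpa [Part.some_inj] using this
  exact Subtype.ext this

lemma mem_cyl_ofFn {N : ℕ} (v : Fin N → Bool) (A : ℕ → Bool) :
    A ∈ cylinder (List.ofFn v) ↔ ∀ i : Fin N, A i = v i := by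
  constructor
  · intro h i
    have hi : (i : ℕ) < (List.ofFn v).length := by simpa using i.isLt
    have := h i hi
    rwa [List.getD_eq_getElem _ _ hi, List.getElem_ofFn, Fin.eta] at this
  · intro h i hi
    have hi' : i < N := by simpa using hi
    rw [List.getD_eq_getElem _ _ hi, List.getElem_ofFn]
    exact h ⟨i, hi'⟩

lemma autored_null (μ : Measure (ℕ → Bool)) (hμ : IsFairCoin μ) (k : ℕ → ℕ)
    (hk : {x | k x ≠ x}.Infinite) : μ {A : ℕ → Bool | ∀ x, A x = A (k x)} = 0 := by
  have hex : ∀ m : ℕ, ∃ b, k b ≠ b ∧ m < b := by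
    intro m
    obtain ⟨b, hb, hb2⟩ := hk.exists_gt m
    exact ⟨b, hb, hb2⟩
  choose g hg1 hg2 using hex
  -- build the sequence of (x i, running max M i)
  let F : ℕ → ℕ × ℕ := fun i => Nat.rec (g 0, max (g 0) (k (g 0)))
      (fun _ p => (g p.2, max p.2 (max (g p.2) (k (g p.2))))) i
  set x : ℕ → ℕ := fun i => (F i).1 with hxdef
  set M : ℕ → ℕ := fun i => (F i).2 with hMdef
  have hF0 : F 0 = (g 0, max (g 0) (k (g 0))) := rfl
  have hFs : ∀ i, F (i + 1) = (g (M i), max (M i) (max (g (M i)) (k (g (M i))))) :=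
    fun i => rfl
  have hx0 : x 0 = g 0 := by simp [hxdef, hF0]
  have hxs : ∀ i, x (i + 1) = g (M i) := by intro i; simp [hxdef, hFs i]
  have hM0 : M 0 = max (g 0) (k (g 0)) := by simp [hMdef, hF0]
  have hMs : ∀ i, M (i + 1) = max (M i) (max (g (M i)) (k (g (M i)))) := by
    intro i; simp [hMdef, hFs i]
  have hmem : ∀ i, k (x i) ≠ x i := by
    intro i; cases i with
    | zero => rw [hx0]; exact hg1 0
    | succ m => rw [hxs m]; exact hg1 (M m)
  have hxM : ∀ i, x i ≤ M i := by
    intro i; cases i with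
    | zero => rw [hx0, hM0]; exact le_max_left _ _
    | succ m => rw [hxs m, hMs m]; exact le_trans (le_max_left _ _) (le_max_right _ _)
  have hkM : ∀ i, k (x i) ≤ M i := by
    intro i; cases i with
    | zero => rw [hx0, hM0]; exact le_max_right _ _
    | succ m => rw [hxs m, hMs m]; exact le_trans (le_max_right _ _) (le_max_right _ _)
  have hMx : ∀ i, M i < x (i + 1) := by
    intro i; rw [hxs i]; exact hg2 (M i)
  have hMmono : Monotone M := monotone_nat_of_le_succ (fun i => by
    rw [hMs i]; exact le_max_left _ _)
  have hxmono : StrictMono x := strictMono_nat_of_lt_succ (fun i =>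
    lt_of_le_of_lt (hxM i) (hMx i))
  have hMlt : ∀ i j : ℕ, i < j → M i < x j := by
    intro i j hij
    calc M i ≤ M (j - 1) := hMmono (by omega)
    _ < x j := by
        have h := hMx (j - 1)
        rwa [show j - 1 + 1 = j by omega] at h
  -- the key bound: μ D ≤ (1/2)^n for every n
  have hbound : ∀ n : ℕ, μ {A : ℕ → Bool | ∀ x, A x = A (k x)} ≤ (1 / 2 : ENNReal) ^ n := by
    intro n
    set N := M n + 1 with hN
    have hxN : ∀ i : Fin n, x i < N := fun i =>
      lt_of_le_of_lt (le_trans (hxM i) (hMmono (le_of_lt i.isLt))) (Nat.lt_succ_self _)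
    have hyN : ∀ i : Fin n, k (x i) < N := fun i =>
      lt_of_le_of_lt (le_trans (hkM i) (hMmono (le_of_lt i.isLt))) (Nat.lt_succ_self _)
    set xF : Fin n → Fin N := fun i => ⟨x i, hxN i⟩ with hxF
    set yF : Fin n → Fin N := fun i => ⟨k (x i), hyN i⟩ with hyF
    have hxFinj : Function.Injective xF := by
      intro i j h
      have : x i = x j := congrArg Fin.val h
      exact Fin.ext (hxmono.injective this)
    -- k (x i) = x j implies j < i
    have hcyc : ∀ i j : Fin n, yF i = xF j → (j : ℕ) < (i : ℕ) := by
      intro i j h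
      have hval : k (x (i : ℕ)) = x (j : ℕ) := congrArg Fin.val h
      rcases lt_trichotomy (j : ℕ) (i : ℕ) with h1 | h1 | h1
      · exact h1
      · exfalso
        apply hmem (i : ℕ)
        rw [hval, h1]
      · exfalso
        have h2 : k (x (i : ℕ)) < x (j : ℕ) := lt_of_le_of_lt (hkM i) (hMlt _ _ h1)
        omega
    set V : Finset (Fin N → Bool) :=
      Finset.univ.filter (fun v => ∀ i : Fin n, v (xF i) = v (yF i)) with hV
    -- subset of union of cylinders
    have hsub : {A : ℕ → Bool | ∀ x, A x = A (k x)} ⊆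
        ⋃ v ∈ V, cylinder (List.ofFn v) := by
      intro A hA
      refine Set.mem_biUnion (?_ : (fun j : Fin N => A j) ∈ V) ?_
      · rw [hV, Finset.mem_filter]
        exact ⟨Finset.mem_univ _, fun i => hA (x i)⟩
      · exact (mem_cyl_ofFn _ _).2 (fun i => rfl)
    have hle : μ {A : ℕ → Bool | ∀ x, A x = A (k x)} ≤ (V.card : ENNReal) * (1 / 2) ^ N := by
      calc μ {A : ℕ → Bool | ∀ x, A x = A (k x)}
          ≤ μ (⋃ v ∈ V, cylinder (List.ofFn v)) := measure_mono hsub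
        _ ≤ ∑ v ∈ V, μ (cylinder (List.ofFn v)) := measure_biUnion_finset_le V _
        _ = ∑ v ∈ V, (1 / 2 : ENNReal) ^ N := by
            refine Finset.sum_congr rfl (fun v _ => ?_)
            rw [hμ (List.ofFn v)]; simp [hN]
        _ = (V.card : ENNReal) * (1 / 2) ^ N := by
            rw [Finset.sum_const, nsmul_eq_mul]
    -- counting: V.card ≤ 2 ^ (N - n)
    have hcard : V.card ≤ 2 ^ (N - n) := by
      classical
      set s : Finset (Fin N) := Finset.image xF Finset.univ with hs
      have hscard : s.card = n := by
        rw [hs, Finset.card_image_of_injective _ hxFinj, Finset.card_univ, Fintype.card_fin]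
      have hTcard : Fintype.card {j : Fin N // j ∉ s} = N - n := by
        have h1 : Fintype.card {j : Fin N // j ∉ s} =
            Fintype.card (Fin N) - Fintype.card {j : Fin N // j ∈ s} :=
          Fintype.card_subtype_compl _
        rw [h1, Fintype.card_fin, Fintype.card_coe, hscard]
      have hinj : Set.InjOn (fun (v : Fin N → Bool) (t : {j : Fin N // j ∉ s}) => v t.1) V := by
        intro v hv w hw heq
        have hv2 := (Finset.mem_filter.1 (Finset.mem_coe.1 hv)).2
        have hw2 := (Finset.mem_filter.1 (Finset.mem_coe.1 hw)).2
        have hoff : ∀ j : Fin N, j ∉ s → v j = w j := by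
          intro j hj
          exact congrFun heq ⟨j, hj⟩
        have key : ∀ m : ℕ, ∀ i : Fin n, (i : ℕ) < m → v (xF i) = w (xF i) := by
          intro m
          induction m with
          | zero => intro i hi; omega
          | succ m ih =>
            intro i hi
            rcases Nat.lt_succ_iff_lt_or_eq.1 hi with h1 | h1
            · exact ih i h1
            · rw [hv2 i, hw2 i]
              by_cases hcase : ∃ j : Fin n, xF j = yF i
              · obtain ⟨j, hj⟩ := hcase
                have hji : (j : ℕ) < (i : ℕ) := hcyc i j hj.symm
                rw [← hj]
                exact ih j (by omega)
              · push_neg at hcase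
                refine hoff (yF i) ?_
                rw [hs, Finset.mem_image]
                rintro ⟨j, -, hj⟩
                exact hcase j hj
        funext j
        by_cases hj : j ∈ s
        · rw [hs, Finset.mem_image] at hj
          obtain ⟨i, -, rfl⟩ := hj
          exact key n i i.isLt
        · exact hoff j hj
      have hcard' : V.card ≤ Fintype.card ({j : Fin N // j ∉ s} → Bool) := by
        have := Finset.card_le_card_of_injOn
          (fun (v : Fin N → Bool) (t : {j : Fin N // j ∉ s}) => v t.1)
          (fun v _ => Finset.mem_univ _) hinj
        simpa using this
      calc V.card ≤ Fintype.card ({j : Fin N // j ∉ s} → Bool) := hcard'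
        _ = 2 ^ (N - n) := by rw [Fintype.card_fun, hTcard, Fintype.card_bool]
    -- arithmetic
    have hxn : n ≤ x n := hxmono.le_apply
    have hnN : n ≤ N := le_trans hxn (le_of_lt (lt_of_le_of_lt (hxM n) (Nat.lt_succ_self _)))
    calc μ {A : ℕ → Bool | ∀ x, A x = A (k x)}
        ≤ (V.card : ENNReal) * (1 / 2) ^ N := hle
      _ ≤ (2 ^ (N - n) : ℕ) * (1 / 2 : ENNReal) ^ N := by
          gcongr
          all_goals exact_mod_cast hcard
      _ = (1 / 2 : ENNReal) ^ n := by
          obtain ⟨m, hm⟩ : ∃ m, N = m + n := ⟨N - n, by omega⟩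
          push_cast
          rw [hm, Nat.add_sub_cancel, pow_add, ← mul_assoc, ← mul_pow]
          have h12 : (2 : ENNReal) * (1 / 2) = 1 := by
            rw [one_div]
            exact ENNReal.mul_inv_cancel two_ne_zero ENNReal.ofNat_ne_top
          rw [h12]
          simp
  -- conclude: measure is 0
  by_contra hne
  obtain ⟨n, hn⟩ := ENNReal.exists_inv_two_pow_lt hne
  have := hbound n
  rw [one_div] at this
  exact absurd this (not_le.2 hn)

/-- The class of m-rigid sets has full fair-coin measure; equivalently, the
class of non-m-rigid sets is null. -/
theorem stmt_13 (μ : Measure (ℕ → Bool)) (hμ : IsFairCoin μ) :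
    μ {A : ℕ → Bool | MRigid A} = 1 ∧ μ {A : ℕ → Bool | ¬ MRigid A} = 0 := by
  have huniv : μ Set.univ = 1 := by
    have := hμ []
    have hc : _root_.cylinder [] = Set.univ := by
      ext A
      simp [_root_.cylinder]
    rw [hc] at this
    simpa using this
  set K : Set (ℕ → ℕ) := {k | Computable k ∧ {x | k x ≠ x}.Infinite} with hK
  have hKc : K.Countable := countable_computable.mono (fun k hk => hk.1)
  have hsub : {A : ℕ → Bool | ¬ MRigid A} ⊆
      ⋃ k ∈ K, {A : ℕ → Bool | ∀ x, A x = A (k x)} := by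
    intro A hA
    simp only [Set.mem_setOf_eq, MRigid] at hA
    push_neg at hA
    obtain ⟨k, hcomp, hauto, hfin⟩ := hA
    exact Set.mem_biUnion ⟨hcomp, hfin⟩ hauto
  have hnull : μ {A : ℕ → Bool | ¬ MRigid A} = 0 := by
    refine measure_mono_null hsub ?_
    rw [measure_biUnion_null_iff hKc]
    exact fun k hk => autored_null μ hμ k hk.2
  refine ⟨?_, hnull⟩
  have hcompl : {A : ℕ → Bool | MRigid A} = {A : ℕ → Bool | ¬ MRigid A}ᶜ := by
    ext A; simp
  rw [hcompl]
  refine le_antisymm (le_trans (measure_mono (Set.subset_univ _)) (le_of_eq huniv)) ?_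
  have h1 : (1 : ENNReal) = μ Set.univ := huniv.symm
  rw [h1]
  calc μ Set.univ = μ ({A : ℕ → Bool | ¬ MRigid A} ∪ {A : ℕ → Bool | ¬ MRigid A}ᶜ) := by
        rw [Set.union_compl_self]
    _ ≤ μ {A : ℕ → Bool | ¬ MRigid A} + μ {A : ℕ → Bool | ¬ MRigid A}ᶜ := measure_union_le _ _
    _ = μ {A : ℕ → Bool | ¬ MRigid A}ᶜ := by rw [hnull, zero_add]
end

section
/- Every Martin-Löf random set A ∈ 2^ω is m-rigid. -/
open MeasureTheory

/-- `(U n)` is a Martin-Löf test w.r.t. `μ`: a uniformly c.e. sequence of open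
sets (each `U n` is the union of the cylinders over a uniformly c.e. set of
strings) with `μ (U n) ≤ 2^{-n}`. -/
def MLTest (μ : Measure (ℕ → Bool)) (U : ℕ → Set (ℕ → Bool)) : Prop :=
  (∃ W : ℕ → List Bool → Prop,
      REPred (fun p : ℕ × List Bool => W p.1 p.2) ∧
      ∀ n, U n = ⋃ σ ∈ {σ | W n σ}, cylinder σ) ∧
  ∀ n, μ (U n) ≤ (1 / 2 : ENNReal) ^ n

/-- `A` is Martin-Löf random (w.r.t. `μ`) if it avoids every Martin-Löf test. -/
def MLRandom (μ : Measure (ℕ → Bool)) (A : ℕ → Bool) : Prop :=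
  ∀ U : ℕ → Set (ℕ → Bool), MLTest μ U → A ∉ ⋂ n, U n

set_option maxHeartbeats 1000000

namespace Stmt14

variable (k : ℕ → ℕ)

/-- predicate for the search -/
def P (B x : ℕ) : Prop := B ≤ x ∧ k x ≠ x

instance (B x : ℕ) : Decidable (P k B x) := by unfold P; infer_instance

/-- least `x < m` with `P k B x`, if any. -/
def bfind (B : ℕ) : ℕ → Option ℕ :=
  Nat.rec none (fun x ih => ih.elim (if P k B x then some x else none) some)

/-- the constraint a string `σ` must satisfy at `x`. -/
def Con (σ : List Bool) (x : ℕ) : Prop :=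
  σ.getD x false = σ.getD (k x) false ∧ max x (k x) < σ.length

instance (σ : List Bool) (x : ℕ) : Decidable (Con k σ x) := by unfold Con; infer_instance

/-- one step of the verification: given bound `B`, search for the next witness
below `m`, check the constraint, return the new bound. -/
def step (σ : List Bool) (m B : ℕ) : Option ℕ :=
  (bfind k B m).bind fun x => if Con k σ x then some (max x (k x) + 1) else none

/-- run `n` steps of the verification. -/
def srec (σ : List Bool) (m : ℕ) : ℕ → Option ℕ :=
  Nat.rec (some 0) (fun _ ih => ih.bind fun B => step k σ m B)

def Phi (n : ℕ) (σ : List Bool) (m : ℕ) : Bool := (srec k σ m n).isSome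

def W (n : ℕ) (σ : List Bool) : Prop := ∃ m, Phi k n σ m = true

def U (n : ℕ) : Set (ℕ → Bool) := ⋃ σ ∈ {σ | W k n σ}, cylinder σ

lemma bfind_succ (B m : ℕ) :
    bfind k B (m+1) = (bfind k B m).elim (if P k B m then some m else none) some := rfl

lemma bfind_cases (B m : ℕ) :
    (bfind k B m = none ∧ ∀ y < m, ¬ P k B y) ∨
    ∃ x, bfind k B m = some x ∧ P k B x ∧ x < m ∧ ∀ y < x, ¬ P k B y := by
  induction m with
  | zero => left; exact ⟨rfl, by omega⟩
  | succ m ih =>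
    rcases ih with ⟨hn, hall⟩ | ⟨x, hx, hP, hlt, hmin⟩
    · rw [bfind_succ, hn]
      by_cases h : P k B m
      · right
        exact ⟨m, by simp [h], h, Nat.lt_succ_self m, hall⟩
      · left
        refine ⟨by simp [h], fun y hy => ?_⟩
        rcases Nat.lt_succ_iff_lt_or_eq.1 hy with hy | rfl
        · exact hall y hy
        · exact h
    · right
      exact ⟨x, by rw [bfind_succ, hx]; rfl, hP, hlt.trans (Nat.lt_succ_self m), hmin⟩

lemma bfind_eq_some {B m x : ℕ} :
    bfind k B m = some x ↔ P k B x ∧ x < m ∧ ∀ y < x, ¬ P k B y := by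
  rcases bfind_cases k B m with ⟨hn, hall⟩ | ⟨x', hx', hP, hlt, hmin⟩
  · rw [hn]
    simp only [false_iff, reduceCtorEq]
    rintro ⟨h1, h2, -⟩
    exact hall x h2 h1
  · rw [hx']
    constructor
    · rintro h
      cases h
      exact ⟨hP, hlt, hmin⟩
    · rintro ⟨h1, h2, h3⟩
      have : x = x' := by
        by_contra hne
        rcases lt_or_gt_of_ne hne with hl | hg
        · exact hmin x hl h1
        · exact h3 x' hg hP
      rw [this]

def extv {L : ℕ} (v : Fin L → Bool) (j : ℕ) : Bool := if h : j < L then v ⟨j, h⟩ else false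

lemma extv_update_ne {L : ℕ} (v : Fin L → Bool) (a : Fin L) (b : Bool) {j : ℕ} (hj : j ≠ (a : ℕ)) :
    extv (Function.update v a b) j = extv v j := by
  unfold extv
  split
  · next h => rw [Function.update_of_ne (Fin.ne_of_val_ne hj)]
  · rfl

lemma extv_update_self {L : ℕ} (v : Fin L → Bool) (a : Fin L) (b : Bool) :
    extv (Function.update v a b) (a : ℕ) = b := by
  unfold extv
  rw [dif_pos a.isLt]
  simp

lemma extv_eq {L : ℕ} (v : Fin L → Bool) {j : ℕ} (h : j < L) : extv v j = v ⟨j, h⟩ := dif_pos h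

/-- The abstract counting lemma: constraints `v c.1 = v c.2` indexed by `i < n`,
where the coordinate `a i := (c i).1` is "fresh": distinct from `a j`, `b j` for `j < i`
and from `b i`.  Then the number of satisfying `v` is `2 ^ (L - n)`. -/
lemma card_filter_constraints (L n : ℕ) (a b : ℕ → ℕ)
    (hab : ∀ i < n, a i ≠ b i)
    (hfresh : ∀ i < n, ∀ j < i, a j < a i ∧ b j < a i)
    (hL : ∀ i < n, a i < L ∧ b i < L) :
    (Finset.univ.filter (fun v : Fin L → Bool => ∀ i < n, extv v (a i) = extv v (b i))).card
      * 2 ^ n = 2 ^ L := by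
  induction n with
  | zero => simp
  | succ n ih =>
    have hind := ih (fun i hi => hab i (hi.trans (Nat.lt_succ_self n)))
      (fun i hi => hfresh i (hi.trans (Nat.lt_succ_self n)))
      (fun i hi => hL i (hi.trans (Nat.lt_succ_self n)))
    set F := Finset.univ.filter (fun v : Fin L → Bool => ∀ i < n, extv v (a i) = extv v (b i))
      with hF
    have haL : a n < L := (hL n (Nat.lt_succ_self n)).1
    set aa : Fin L := ⟨a n, haL⟩ with haa
    -- split F by the last constraint
    have hsplit :
        (F.filter (fun v => extv v (a n) = extv v (b n))).card +
          (F.filter (fun v => ¬ (extv v (a n) = extv v (b n)))).card = F.card :=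
      Finset.card_filter_add_card_filter_not _
    -- the flip bijection
    have hflipmem : ∀ v : Fin L → Bool, v ∈ F → Function.update v aa (!v aa) ∈ F := by
      intro v hv
      simp only [hF, Finset.mem_filter, Finset.mem_univ, true_and] at hv ⊢
      intro i hi
      have h1 : a i ≠ (aa : ℕ) :=
        Nat.ne_of_lt (hfresh n (Nat.lt_succ_self n) i hi).1
      have h2 : b i ≠ (aa : ℕ) :=
        Nat.ne_of_lt (hfresh n (Nat.lt_succ_self n) i hi).2
      rw [extv_update_ne v aa _ h1, extv_update_ne v aa _ h2]
      exact hv i hi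
    have hflipC : ∀ v : Fin L → Bool,
        extv (Function.update v aa (!v aa)) (a n) = extv (Function.update v aa (!v aa)) (b n)
          ↔ ¬ (extv v (a n) = extv v (b n)) := by
      intro v
      have h2 : b n ≠ (aa : ℕ) := fun h => (hab n (Nat.lt_succ_self n)) (by simp [haa] at h; omega)
      have e1 : extv (Function.update v aa (!v aa)) (a n) = !extv v (a n) := by
        have : (a n) = (aa : ℕ) := rfl
        rw [this, extv_update_self, extv_eq v haL]
      rw [e1, extv_update_ne v aa _ h2]
      cases extv v (a n) <;> cases extv v (b n) <;> simp
    have hcard_eq :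
        (F.filter (fun v => extv v (a n) = extv v (b n))).card =
        (F.filter (fun v => ¬ (extv v (a n) = extv v (b n)))).card := by
      apply Finset.card_bij' (fun v _ => Function.update v aa (!v aa))
        (fun v _ => Function.update v aa (!v aa)) ?hi ?hj ?li ?ri
      case hi =>
        intro v hv
        simp only [Finset.mem_filter] at hv ⊢
        exact ⟨hflipmem v hv.1, fun h => (hflipC v).1 h hv.2⟩
      case hj =>
        intro v hv
        simp only [Finset.mem_filter] at hv ⊢
        exact ⟨hflipmem v hv.1, (hflipC v).2 hv.2⟩
      case li => intro v _; simp
      case ri => intro v _; simp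
    have hQeq : Finset.univ.filter (fun v : Fin L → Bool =>
        ∀ i < n + 1, extv v (a i) = extv v (b i)) =
        F.filter (fun v => extv v (a n) = extv v (b n)) := by
      rw [hF, Finset.filter_filter]
      apply Finset.filter_congr
      intro v _
      constructor
      · intro h; exact ⟨fun i hi => h i (hi.trans (Nat.lt_succ_self n)), h n (Nat.lt_succ_self n)⟩
      · rintro ⟨h1, h2⟩ i hi
        rcases Nat.lt_succ_iff_lt_or_eq.1 hi with hi | rfl
        · exact h1 i hi
        · exact h2
    rw [hQeq]
    set c := (F.filter (fun v => extv v (a n) = extv v (b n))).card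
    calc c * 2 ^ (n + 1) = (c * 2) * 2 ^ n := by ring
      _ = F.card * 2 ^ n := by rw [show c * 2 = F.card by omega]
      _ = 2 ^ L := hind


open Computable in
lemma computable_Pdec (hk : Computable k) :
    Computable₂ fun B x : ℕ => decide (P k B x) := by
  have h1 : Computable₂ fun B x : ℕ => decide (B ≤ x) := Primrec.nat_le.decide.to_comp
  have h2 : Computable₂ fun B x : ℕ => decide (k x = x) :=
    ((Primrec.eq (α := ℕ)).decide.to_comp.comp (hk.comp Computable.snd) Computable.snd).to₂
  have := Computable.cond (c := fun p : ℕ × ℕ => decide (p.1 ≤ p.2))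
    (f := fun p : ℕ × ℕ => !decide (k p.2 = p.2)) (g := fun _ => false)
    h1 ((Primrec.not).to_comp.comp h2) (Computable.const false)
  refine this.of_eq fun p => ?_
  by_cases hle : p.1 ≤ p.2 <;> by_cases heq : k p.2 = p.2 <;>
    simp [P, hle, heq]

open Computable in
lemma computable_bfind (hk : Computable k) :
    Computable₂ fun B m : ℕ => bfind k B m := by
  have hh : Computable₂ fun (a : ℕ × ℕ) (p : ℕ × Option ℕ) =>
      p.2.elim (if P k a.1 p.1 then some p.1 else none) some := by
    have hf : Computable fun u : (ℕ × ℕ) × ℕ × Option ℕ =>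
        if P k u.1.1 u.2.1 then some u.2.1 else none := by
      have hc := computable_Pdec k hk
      have := Computable.cond
        (c := fun u : (ℕ × ℕ) × ℕ × Option ℕ => decide (P k u.1.1 u.2.1))
        (f := fun u : (ℕ × ℕ) × ℕ × Option ℕ => some u.2.1)
        (g := fun _ => (none : Option ℕ))
        (hc.comp (fst.comp fst) (fst.comp snd))
        (option_some.comp (fst.comp snd)) (Computable.const none)
      refine this.of_eq fun u => ?_
      by_cases h : P k u.1.1 u.2.1 <;> simp [h]
    have := Computable.option_casesOn
      (o := fun u : (ℕ × ℕ) × ℕ × Option ℕ => u.2.2)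
      (g := fun (_ : (ℕ × ℕ) × ℕ × Option ℕ) (b : ℕ) => some b)
      (snd.comp snd) hf (option_some.comp snd).to₂
    show Computable fun u : (ℕ × ℕ) × ℕ × Option ℕ =>
      u.2.2.elim (if P k u.1.1 u.2.1 then some u.2.1 else none) some
    refine this.of_eq fun u => ?_
    obtain ⟨a, b, o⟩ := u
    cases o <;> rfl
  have := Computable.nat_rec (f := fun a : ℕ × ℕ => a.2)
    (g := fun _ : ℕ × ℕ => (none : Option ℕ))
    (h := fun (a : ℕ × ℕ) (p : ℕ × Option ℕ) =>
      p.2.elim (if P k a.1 p.1 then some p.1 else none) some)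
    snd (Computable.const none) hh
  refine this.of_eq fun a => ?_
  obtain ⟨B, m⟩ := a
  induction m with
  | zero => rfl
  | succ m ih => exact congrArg (fun o : Option ℕ => o.elim (if P k B m then some m else none) some) ih

open Computable in
lemma computable_step (hk : Computable k) :
    Computable fun u : (List Bool × ℕ) × ℕ => step k u.1.1 u.1.2 u.2 := by
  apply Computable.option_bind
    (f := fun u : (List Bool × ℕ) × ℕ => bfind k u.2 u.1.2)
    (g := fun (u : (List Bool × ℕ) × ℕ) (x : ℕ) =>
      if Con k u.1.1 x then some (max x (k x) + 1) else none)
    ((computable_bfind k hk).comp snd (snd.comp fst))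
  -- inner
  have hgetD : Computable₂ fun (l : List Bool) (n : ℕ) => l.getD n false :=
    (Primrec.list_getD false).to_comp
  have hc1 : Computable fun w : ((List Bool × ℕ) × ℕ) × ℕ =>
      decide (w.1.1.1.getD w.2 false = w.1.1.1.getD (k w.2) false) :=
    (Primrec.eq (α := Bool)).decide.to_comp.comp
      (hgetD.comp (fst.comp (fst.comp fst)) snd)
      (hgetD.comp (fst.comp (fst.comp fst)) (hk.comp snd))
  have hmax : Computable fun w : ((List Bool × ℕ) × ℕ) × ℕ => max w.2 (k w.2) :=
    Primrec.nat_max.to_comp.comp snd (hk.comp snd)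
  have hc2 : Computable fun w : ((List Bool × ℕ) × ℕ) × ℕ =>
      decide (max w.2 (k w.2) < w.1.1.1.length) :=
    Primrec.nat_lt.decide.to_comp.comp hmax (Primrec.list_length.to_comp.comp (fst.comp (fst.comp fst)))
  have hval : Computable fun w : ((List Bool × ℕ) × ℕ) × ℕ => some (max w.2 (k w.2) + 1) :=
    option_some.comp (Computable.succ.comp hmax)
  have := Computable.cond (c := fun w : ((List Bool × ℕ) × ℕ) × ℕ =>
      decide (w.1.1.1.getD w.2 false = w.1.1.1.getD (k w.2) false))
    (f := fun w : ((List Bool × ℕ) × ℕ) × ℕ =>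
      cond (decide (max w.2 (k w.2) < w.1.1.1.length)) (some (max w.2 (k w.2) + 1)) none)
    (g := fun _ => (none : Option ℕ)) hc1
    (Computable.cond hc2 hval (Computable.const none)) (Computable.const none)
  refine this.to₂.of_eq fun w => ?_
  by_cases h1 : w.1.1.1.getD w.2 false = w.1.1.1.getD (k w.2) false <;>
    by_cases h2 : max w.2 (k w.2) < w.1.1.1.length <;>
      simp [Con, h1, h2]

open Computable in
lemma computable_Phi (hk : Computable k) :
    Computable₂ fun (p : ℕ × List Bool) (m : ℕ) => Phi k p.1 p.2 m := by
  have hsrec : Computable fun u : (ℕ × List Bool) × ℕ => srec k u.1.2 u.2 u.1.1 := by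
    have hh : Computable₂ fun (a : (ℕ × List Bool) × ℕ) (p : ℕ × Option ℕ) =>
        p.2.bind fun B => step k a.1.2 a.2 B := by
      have hg : Computable₂ fun (u : ((ℕ × List Bool) × ℕ) × ℕ × Option ℕ) (B : ℕ) =>
          step k u.1.1.2 u.1.2 B :=
        ((computable_step k hk).comp
          (Computable.pair (Computable.pair (snd.comp (fst.comp (fst.comp fst)))
            (snd.comp (fst.comp fst))) snd)).to₂
      have hb := Computable.option_bind
        (f := fun u : ((ℕ × List Bool) × ℕ) × ℕ × Option ℕ => u.2.2)
        (g := fun (u : ((ℕ × List Bool) × ℕ) × ℕ × Option ℕ) (B : ℕ) =>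
          step k u.1.1.2 u.1.2 B)
        (snd.comp snd) hg
      show Computable fun u : ((ℕ × List Bool) × ℕ) × ℕ × Option ℕ =>
        u.2.2.bind fun B => step k u.1.1.2 u.1.2 B
      exact hb
    have := Computable.nat_rec (f := fun a : (ℕ × List Bool) × ℕ => a.1.1)
      (g := fun _ : (ℕ × List Bool) × ℕ => (some 0 : Option ℕ))
      (h := fun (a : (ℕ × List Bool) × ℕ) (p : ℕ × Option ℕ) =>
        p.2.bind fun B => step k a.1.2 a.2 B)
      (fst.comp fst) (Computable.const (some 0)) hh
    refine this.of_eq fun a => ?_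
    obtain ⟨⟨n, σ⟩, m⟩ := a
    induction n with
    | zero => rfl
    | succ n ih => exact congrArg (fun o : Option ℕ => o.bind fun B => step k σ m B) ih
  exact (Primrec.option_isSome.to_comp.comp hsrec).to₂


lemma W_re (hk : Computable k) : REPred fun p : ℕ × List Bool => W k p.1 p.2 := by
  have hPhi := computable_Phi k hk
  have hpart : Partrec fun p : ℕ × List Bool =>
      Nat.rfind fun m => (Phi k p.1 p.2 m : Part Bool) :=
    Partrec.rfind hPhi.partrec₂
  refine hpart.dom_re.of_eq fun p => ?_
  refine Nat.rfind_dom.trans ?_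
  constructor
  · rintro ⟨n, hn, -⟩
    exact ⟨n, by simpa using hn⟩
  · rintro ⟨m, hm⟩
    exact ⟨m, by simpa using hm, fun {_} _ => trivial⟩



section Infinite

variable (hinf : ∀ B, ∃ x, P k B x)
include hinf

/-- the least `x ≥ B` with `k x ≠ x`. -/
noncomputable def nxt (B : ℕ) : ℕ := Nat.find (hinf B)

/-- the greedy sequence of bounds. -/
noncomputable def bd : ℕ → ℕ :=
  Nat.rec 0 (fun _ B => max (nxt k hinf B) (k (nxt k hinf B)) + 1)

/-- the greedy sequence of witnesses. -/
noncomputable def xs (i : ℕ) : ℕ := nxt k hinf (bd k hinf i)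

lemma nxt_spec (B : ℕ) : P k B (nxt k hinf B) := Nat.find_spec (hinf B)

lemma nxt_min {B y : ℕ} (h : y < nxt k hinf B) : ¬ P k B y := Nat.find_min (hinf B) h

lemma bd_succ (i : ℕ) : bd k hinf (i + 1) = max (xs k hinf i) (k (xs k hinf i)) + 1 := rfl

lemma bd_le_xs (i : ℕ) : bd k hinf i ≤ xs k hinf i := (nxt_spec k hinf _).1

lemma k_xs_ne (i : ℕ) : k (xs k hinf i) ≠ xs k hinf i := (nxt_spec k hinf _).2

lemma bd_mono : Monotone (bd k hinf) := by
  apply monotone_nat_of_le_succ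
  intro i
  rw [bd_succ]
  exact le_trans (bd_le_xs k hinf i) (le_trans (le_max_left _ _) (Nat.le_succ _))

lemma xs_lt_bd {i n : ℕ} (h : i < n) :
    xs k hinf i < bd k hinf n ∧ k (xs k hinf i) < bd k hinf n := by
  have h1 : bd k hinf (i+1) ≤ bd k hinf n := bd_mono k hinf h
  rw [bd_succ] at h1
  constructor
  · exact lt_of_lt_of_le (Nat.lt_succ_of_le (le_max_left _ _)) h1
  · exact lt_of_lt_of_le (Nat.lt_succ_of_le (le_max_right _ _)) h1

lemma xs_lt_xs {i n : ℕ} (h : i < n) :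
    xs k hinf i < xs k hinf n ∧ k (xs k hinf i) < xs k hinf n := by
  have := xs_lt_bd k hinf h
  have h2 := bd_le_xs k hinf n
  exact ⟨lt_of_lt_of_le this.1 h2, lt_of_lt_of_le this.2 h2⟩

lemma bfind_of_lt {B m : ℕ} (h : nxt k hinf B < m) : bfind k B m = some (nxt k hinf B) := by
  rw [bfind_eq_some]
  exact ⟨nxt_spec k hinf B, h, fun y hy => nxt_min k hinf hy⟩

lemma bfind_eq_nxt {B m x : ℕ} (h : bfind k B m = some x) : x = nxt k hinf B := by
  rw [bfind_eq_some] at h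
  rcases h with ⟨h1, _, h3⟩
  by_contra hne
  rcases lt_or_gt_of_ne hne with hlt | hgt
  · exact nxt_min k hinf hlt h1
  · exact h3 _ hgt (nxt_spec k hinf B)

/-- soundness: if the verification of `n` steps succeeds then the state is the
true bound and all the true constraints hold. -/
lemma srec_sound {σ : List Bool} {m n : ℕ} {B : ℕ} (h : srec k σ m n = some B) :
    B = bd k hinf n ∧ ∀ i < n, Con k σ (xs k hinf i) := by
  induction n generalizing B with
  | zero =>
    simp only [srec] at h
    exact ⟨by show B = 0; simpa using h.symm, by omega⟩
  | succ n ih =>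
    simp only [srec, Option.bind_eq_some_iff] at h
    obtain ⟨B', hB', hstep⟩ := h
    obtain ⟨rfl, hcon⟩ := ih hB'
    simp only [step, Option.bind_eq_some_iff] at hstep
    obtain ⟨x, hx, hif⟩ := hstep
    have hxeq : x = xs k hinf n := bfind_eq_nxt k hinf hx
    subst hxeq
    by_cases hc : Con k σ (xs k hinf n)
    · rw [if_pos hc] at hif
      refine ⟨by simpa [bd_succ] using hif.symm, ?_⟩
      intro i hi
      rcases Nat.lt_succ_iff_lt_or_eq.1 hi with hi | rfl
      · exact hcon i hi
      · exact hc
    · rw [if_neg hc] at hif; exact absurd hif (by simp)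

/-- completeness: if all the true constraints hold and `m` is large enough,
the verification succeeds. -/
lemma srec_complete {σ : List Bool} {m n : ℕ}
    (hm : ∀ i < n, xs k hinf i < m) (hcon : ∀ i < n, Con k σ (xs k hinf i)) :
    srec k σ m n = some (bd k hinf n) := by
  induction n with
  | zero => rfl
  | succ n ih =>
    have h1 : srec k σ m n = some (bd k hinf n) :=
      ih (fun i hi => hm i (hi.trans (Nat.lt_succ_self n)))
        (fun i hi => hcon i (hi.trans (Nat.lt_succ_self n)))
    show (srec k σ m n).bind (fun B => step k σ m B) = _
    rw [h1, Option.bind_some]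
    show (bfind k (bd k hinf n) m).bind _ = _
    rw [bfind_of_lt k hinf (hm n (Nat.lt_succ_self n)), Option.bind_some]
    show (if Con k σ (xs k hinf n) then _ else none) = _
    rw [if_pos (hcon n (Nat.lt_succ_self n))]
    rfl

/-- the "bad" event. -/
def E (n : ℕ) : Set (ℕ → Bool) := {X | ∀ i < n, X (xs k hinf i) = X (k (xs k hinf i))}

lemma U_subset_E (n : ℕ) : U k n ⊆ E k hinf n := by
  intro X hX
  simp only [U, Set.mem_iUnion, Set.mem_setOf_eq] at hX
  obtain ⟨σ, ⟨m, hm⟩, hcyl⟩ := hX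
  simp only [Phi, Option.isSome_iff_exists] at hm
  obtain ⟨B, hB⟩ := hm
  obtain ⟨-, hcon⟩ := srec_sound k hinf hB
  intro i hi
  obtain ⟨hc1, hc2⟩ := hcon i hi
  have hx : xs k hinf i < σ.length := lt_of_le_of_lt (le_max_left _ _) hc2
  have hkx : k (xs k hinf i) < σ.length := lt_of_le_of_lt (le_max_right _ _) hc2
  rw [hcyl _ hx, hcyl _ hkx, hc1]

/-- the set of length-`bd n` strings satisfying the first `n` constraints. -/
noncomputable def S (n : ℕ) : Finset (Fin (bd k hinf n) → Bool) :=
  Finset.univ.filter (fun v => ∀ i < n, extv v (xs k hinf i) = extv v (k (xs k hinf i)))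

lemma card_S (n : ℕ) : (S k hinf n).card * 2 ^ n = 2 ^ (bd k hinf n) :=
  card_filter_constraints _ n (fun i => xs k hinf i) (fun i => k (xs k hinf i))
    (fun i _ => (k_xs_ne k hinf i).symm)
    (fun _ _ j hj => xs_lt_xs k hinf hj)
    (fun i hi => xs_lt_bd k hinf hi)

lemma E_subset (n : ℕ) :
    E k hinf n ⊆ ⋃ v ∈ S k hinf n, cylinder (List.ofFn v) := by
  intro X hX
  simp only [Set.mem_iUnion]
  refine ⟨fun j : Fin (bd k hinf n) => X j, ?_, ?_⟩
  · simp only [S, Finset.mem_filter, Finset.mem_univ, true_and]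
    intro i hi
    rw [extv_eq _ (xs_lt_bd k hinf hi).1, extv_eq _ (xs_lt_bd k hinf hi).2]
    exact hX i hi
  · intro i hi
    rw [List.length_ofFn] at hi
    rw [List.getD_eq_getElem _ _ (by rw [List.length_ofFn]; exact hi), List.getElem_ofFn]

lemma measure_U_le {μ : Measure (ℕ → Bool)} (hμ : IsFairCoin μ) (n : ℕ) :
    μ (U k n) ≤ (1 / 2 : ENNReal) ^ n := by
  have h1 : μ (U k n) ≤ μ (⋃ v ∈ S k hinf n, cylinder (List.ofFn v)) :=
    measure_mono ((U_subset_E k hinf n).trans (E_subset k hinf n))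
  have h2 : μ (⋃ v ∈ S k hinf n, cylinder (List.ofFn v)) ≤
      ∑ v ∈ S k hinf n, μ (cylinder (List.ofFn v)) :=
    measure_biUnion_finset_le _ _
  have h3 : ∑ v ∈ S k hinf n, μ (cylinder (List.ofFn v)) =
      (S k hinf n).card * (1 / 2 : ENNReal) ^ (bd k hinf n) := by
    rw [Finset.sum_congr rfl (fun v _ => by rw [hμ (List.ofFn v), List.length_ofFn]),
      Finset.sum_const, nsmul_eq_mul]
  refine (h1.trans (h2.trans_eq h3)).trans ?_
  have hcast : ((S k hinf n).card : ENNReal) * 2 ^ n = 2 ^ (bd k hinf n) := by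
    exact_mod_cast congrArg (fun t : ℕ => (t : ENNReal)) (card_S k hinf n)
  have hpow : ∀ a : ℕ, (2 : ENNReal) ^ a * (1 / 2 : ENNReal) ^ a = 1 := by
    intro a
    rw [← mul_pow, one_div, ENNReal.mul_inv_cancel two_ne_zero ENNReal.ofNat_ne_top, one_pow]
  set c : ENNReal := ((S k hinf n).card : ENNReal)
  set L := bd k hinf n
  calc c * (1 / 2 : ENNReal) ^ L
      = (c * (1 / 2) ^ L) * (2 ^ n * (1 / 2) ^ n) := by rw [hpow n, mul_one]
    _ = (c * 2 ^ n) * ((1 / 2) ^ L * (1 / 2) ^ n) := by ring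
    _ = 2 ^ L * ((1 / 2) ^ L * (1 / 2) ^ n) := by rw [hcast]
    _ = (2 ^ L * (1 / 2) ^ L) * (1 / 2) ^ n := by ring
    _ = (1 / 2) ^ n := by rw [hpow L, one_mul]
    _ ≤ (1 / 2 : ENNReal) ^ n := le_refl _

lemma A_mem (A : ℕ → Bool) (hAk : ∀ x, A x = A (k x)) (n : ℕ) : A ∈ U k n := by
  have hgd : ∀ j, j < bd k hinf n →
      (List.ofFn fun i : Fin (bd k hinf n) => A i).getD j false = A j := by
    intro j hj
    rw [List.getD_eq_getElem _ _ (by rw [List.length_ofFn]; exact hj), List.getElem_ofFn]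
  have hlen : (List.ofFn fun i : Fin (bd k hinf n) => A i).length = bd k hinf n :=
    List.length_ofFn
  have hcon : ∀ i < n, Con k (List.ofFn fun i : Fin (bd k hinf n) => A i) (xs k hinf i) := by
    intro i hi
    obtain ⟨h1, h2⟩ := xs_lt_bd k hinf hi
    exact ⟨by rw [hgd _ h1, hgd _ h2]; exact hAk _, by rw [hlen]; exact max_lt h1 h2⟩
  have hsrec := srec_complete k hinf (σ := List.ofFn fun i : Fin (bd k hinf n) => A i)
    (m := bd k hinf n) (fun i hi => (xs_lt_bd k hinf hi).1) hcon
  simp only [U, Set.mem_iUnion, Set.mem_setOf_eq]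
  refine ⟨List.ofFn fun i : Fin (bd k hinf n) => A i, ⟨bd k hinf n, ?_⟩, ?_⟩
  · simp [Phi, hsrec]
  · intro i hi
    rw [hlen] at hi
    exact (hgd i hi).symm

end Infinite

end Stmt14

/-- Every Martin-Löf random set is m-rigid. -/
theorem stmt_14 (μ : Measure (ℕ → Bool)) (hμ : IsFairCoin μ)
    (A : ℕ → Bool) (hA : MLRandom μ A) : MRigid A := by
  intro k hkc hAk
  by_contra hfin
  have hinf : ∀ B, ∃ x, Stmt14.P k B x := by
    intro B
    have hI : Set.Infinite {x | k x ≠ x} := hfin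
    obtain ⟨b, hb, hlt⟩ := hI.exists_gt B
    exact ⟨b, le_of_lt hlt, hb⟩
  refine hA (Stmt14.U k) ⟨⟨fun n σ => Stmt14.W k n σ, Stmt14.W_re k hkc, fun n => rfl⟩,
      fun n => Stmt14.measure_U_le k hinf hμ n⟩ ?_
  exact Set.mem_iInter.2 fun n => Stmt14.A_mem k hinf A hAk n
end
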